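/- There is no closed framed curve (γ, T, N, B, κ, τ) in ℝ³ of period L > 0, parametrized by arclength, whose torsion is a nonzero constant and which lies on a sphere (i.e., for which there exist c ∈ ℝ³ and r > 0 with ‖γ(s) − c‖ = r for all s). -/

import Mathlib

open scoped RealInnerProductSpace

/-- The cross product of two vectors in Euclidean 3-space. -/
noncomputable def cross3 (u v : EuclideanSpace ℝ (Fin 3)) : EuclideanSpace ℝ (Fin 3) :=
  WithLp.toLp 2 ![u 1 * v 2 - u 2 * v 1, u 2 * v 0 - u 0 * v 2, u 0 * v 1 - u 1 * v 0]

/-- A framed curve in ℝ³, parametrized by arclength, on the parameter set `I`: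
the maps `T`, `N`, `B` form a positively oriented orthonormal frame at each `s ∈ I`,
`κ` and `τ` are continuous on `I`, and the Frenet equations
`γ' = T`, `T' = κ·N`, `N' = −κ·T + τ·B`, `B' = −τ·N` hold on `I`. -/
structure FramedCurveOn (γ T N B : ℝ → EuclideanSpace ℝ (Fin 3)) (κ τ : ℝ → ℝ)
    (I : Set ℝ) : Prop where
  contκ : ContinuousOn κ I
  contτ : ContinuousOn τ I
  unitT : ∀ s ∈ I, ‖T s‖ = 1
  unitN : ∀ s ∈ I, ‖N s‖ = 1
  unitB : ∀ s ∈ I, ‖B s‖ = 1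
  orthoTN : ∀ s ∈ I, ⟪T s, N s⟫ = (0 : ℝ)
  orthoTB : ∀ s ∈ I, ⟪T s, B s⟫ = (0 : ℝ)
  orthoNB : ∀ s ∈ I, ⟪N s, B s⟫ = (0 : ℝ)
  oriented : ∀ s ∈ I, B s = cross3 (T s) (N s)
  derivγ : ∀ s ∈ I, HasDerivWithinAt γ (T s) I s
  derivT : ∀ s ∈ I, HasDerivWithinAt T (κ s • N s) I s
  derivN : ∀ s ∈ I, HasDerivWithinAt N ((-κ s) • T s + τ s • B s) I s
  derivB : ∀ s ∈ I, HasDerivWithinAt B ((-τ s) • N s) I s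

/-- A closed framed curve in ℝ³ of period `L`: a framed curve defined on all of ℝ,
all of whose data is `L`-periodic. -/
structure ClosedFramedCurve (γ T N B : ℝ → EuclideanSpace ℝ (Fin 3)) (κ τ : ℝ → ℝ)
    (L : ℝ) : Prop where
  framed : FramedCurveOn γ T N B κ τ Set.univ
  periodicγ : Function.Periodic γ L
  periodicT : Function.Periodic T L
  periodicN : Function.Periodic N L
  periodicB : Function.Periodic B L
  periodicκ : Function.Periodic κ L
  periodicτ : Function.Periodic τ L

private theorem aux_no_spherical_constant_torsion (γ T N B : ℝ → EuclideanSpace ℝ (Fin 3)) (κ : ℝ → ℝ) (τ₀ : ℝ)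
    (c : EuclideanSpace ℝ (Fin 3)) (r : ℝ)
    (hγ' : ∀ s, HasDerivAt γ (T s) s)
    (hT' : ∀ s, HasDerivAt T (κ s • N s) s)
    (hN' : ∀ s, HasDerivAt N ((-κ s) • T s + τ₀ • B s) s)
    (hB' : ∀ s, HasDerivAt B ((-τ₀) • N s) s)
    (hTn : ∀ s, ‖T s‖ = 1)
    (hTN : ∀ s, ⟪T s, N s⟫ = (0:ℝ))
    (hNB : ∀ s, ⟪N s, B s⟫ = (0:ℝ))
    (hTB : ∀ s, ⟪T s, B s⟫ = (0:ℝ))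
    (hτ₀ : τ₀ ≠ 0) (hsph : ∀ s, ‖γ s - c‖ = r) : False := by
  set b : ℝ → ℝ := fun s => ⟪N s, γ s - c⟫ with hbdef
  set d : ℝ → ℝ := fun s => ⟪B s, γ s - c⟫ with hddef
  have hγc : ∀ s, HasDerivAt (fun t => γ t - c) (T s) s := fun s => (hγ' s).sub_const c
  -- a ≡ 0
  have hconst : (fun t => ⟪γ t - c, γ t - c⟫) = fun _ => r ^ 2 := funext fun t => by
    rw [real_inner_self_eq_norm_sq, hsph]
  have ha : ∀ s, ⟪T s, γ s - c⟫ = 0 := by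
    intro s
    have h1 : HasDerivAt (fun t => ⟪γ t - c, γ t - c⟫)
        (⟪γ s - c, T s⟫ + ⟪T s, γ s - c⟫) s := (hγc s).inner ℝ (hγc s)
    rw [hconst] at h1
    have h2 := h1.unique (hasDerivAt_const s (r ^ 2))
    have h3 := real_inner_comm (γ s - c) (T s)
    linarith
  -- κ b + 1 = 0
  have hκb : ∀ s, κ s * b s + 1 = 0 := by
    intro s
    have h1 : HasDerivAt (fun t => ⟪T t, γ t - c⟫)
        (⟪T s, T s⟫ + ⟪κ s • N s, γ s - c⟫) s := (hT' s).inner ℝ (hγc s)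
    have h2 : (fun t => ⟪T t, γ t - c⟫) = fun _ => 0 := funext fun t => ha t
    rw [h2] at h1
    have h3 := h1.unique (hasDerivAt_const s 0)
    have h4 : ⟪T s, T s⟫ = 1 := by rw [real_inner_self_eq_norm_sq, hTn]; norm_num
    rw [h4, real_inner_smul_left] at h3
    show κ s * ⟪N s, γ s - c⟫ + 1 = 0
    linarith
  -- derivatives of b and d
  have hb' : ∀ s, HasDerivAt b (τ₀ * d s) s := by
    intro s
    have h1 : HasDerivAt (fun t => ⟪N t, γ t - c⟫)
        (⟪N s, T s⟫ + ⟪(-κ s) • T s + τ₀ • B s, γ s - c⟫) s := (hN' s).inner ℝ (hγc s)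
    have h2 : ⟪N s, T s⟫ + ⟪(-κ s) • T s + τ₀ • B s, γ s - c⟫ = τ₀ * d s := by
      simp only [hddef]
      rw [real_inner_comm (T s) (N s), hTN s, inner_add_left, real_inner_smul_left,
        real_inner_smul_left, ha s]
      ring
    rw [h2] at h1
    exact h1
  have hd' : ∀ s, HasDerivAt d (-(τ₀ * b s)) s := by
    intro s
    have h1 : HasDerivAt (fun t => ⟪B t, γ t - c⟫)
        (⟪B s, T s⟫ + ⟪(-τ₀) • N s, γ s - c⟫) s := (hB' s).inner ℝ (hγc s)
    have h2 : ⟪B s, T s⟫ + ⟪(-τ₀) • N s, γ s - c⟫ = -(τ₀ * b s) := by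
      simp only [hbdef]
      rw [real_inner_comm (T s) (B s), hTB s, real_inner_smul_left]
      ring
    rw [h2] at h1
    exact h1
  -- H constant
  set H : ℝ → ℝ := fun s => b s * Real.cos (τ₀ * s) - d s * Real.sin (τ₀ * s) with hHdef
  have hH' : ∀ s, HasDerivAt H 0 s := by
    intro s
    have hlin : HasDerivAt (fun t : ℝ => τ₀ * t) τ₀ s := by
      simpa using (hasDerivAt_id s).const_mul τ₀
    have hcos : HasDerivAt (fun t : ℝ => Real.cos (τ₀ * t)) (-Real.sin (τ₀ * s) * τ₀) s :=
      hlin.cos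
    have hsin : HasDerivAt (fun t : ℝ => Real.sin (τ₀ * t)) (Real.cos (τ₀ * s) * τ₀) s :=
      hlin.sin
    have h1 := ((hb' s).mul hcos).sub ((hd' s).mul hsin)
    refine (h1 : HasDerivAt H _ s).congr_deriv ?_
    ring
  have hHconst : ∀ x y : ℝ, H x = H y :=
    is_const_of_deriv_eq_zero (fun s => (hH' s).differentiableAt)
      (fun s => (hH' s).deriv)
  set p : ℝ := Real.pi / τ₀ with hpdef
  have hτp : τ₀ * p = Real.pi := by rw [hpdef]; field_simp
  have hbp : b p = -b 0 := by
    have := hHconst p 0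
    simp only [hHdef, hτp, Real.cos_pi, Real.sin_pi, mul_zero, Real.cos_zero,
      Real.sin_zero, mul_one, mul_neg, sub_zero] at this
    linarith
  -- IVT
  have hbc : ContinuousOn b (Set.uIcc 0 p) := fun s _ =>
    ((hb' s).differentiableAt.continuousAt).continuousWithinAt
  have h0mem : (0 : ℝ) ∈ Set.uIcc (b 0) (b p) := by
    rw [hbp, Set.mem_uIcc]
    rcases le_total 0 (b 0) with h | h
    · right; constructor <;> linarith
    · left; constructor <;> linarith
  obtain ⟨s₀, _, hs₀⟩ := intermediate_value_uIcc hbc h0mem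
  have := hκb s₀
  rw [hs₀] at this
  simp at this

/-- There is no closed framed curve of nonzero constant torsion lying on a sphere. -/
theorem no_closed_spherical_curve_of_constant_torsion :
    ¬ ∃ (γ T N B : ℝ → EuclideanSpace ℝ (Fin 3)) (κ τ : ℝ → ℝ) (L τ₀ : ℝ)
        (c : EuclideanSpace ℝ (Fin 3)) (r : ℝ),
      0 < L ∧ ClosedFramedCurve γ T N B κ τ L ∧
        (∀ s, τ s = τ₀) ∧ τ₀ ≠ 0 ∧ 0 < r ∧ (∀ s, ‖γ s - c‖ = r) := by
  rintro ⟨γ, T, N, B, κ, τ, L, τ₀, c, r, hL, hC, hτc, hτ₀, hr, hsph⟩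
  have F := hC.framed
  have hγ' : ∀ s, HasDerivAt γ (T s) s := fun s =>
    hasDerivWithinAt_univ.mp (F.derivγ s trivial)
  have hT' : ∀ s, HasDerivAt T (κ s • N s) s := fun s =>
    hasDerivWithinAt_univ.mp (F.derivT s trivial)
  have hN' : ∀ s, HasDerivAt N ((-κ s) • T s + τ₀ • B s) s := fun s => by
    have h := hasDerivWithinAt_univ.mp (F.derivN s trivial)
    rwa [hτc] at h
  have hB' : ∀ s, HasDerivAt B ((-τ₀) • N s) s := fun s => by
    have h := hasDerivWithinAt_univ.mp (F.derivB s trivial)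
    rwa [hτc] at h
  exact aux_no_spherical_constant_torsion γ T N B κ τ₀ c r hγ' hT' hN' hB'
    (fun s => F.unitT s trivial) (fun s => F.orthoTN s trivial)
    (fun s => F.orthoNB s trivial) (fun s => F.orthoTB s trivial) hτ₀ hsph
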